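/- arXiv:math-ph/0510057 — 3 statements merged into one kernel-verified Lean document; each statement's English description precedes it below -/
import Mathlib

section
/- Let A and B be n×n Hermitian matrices with eigenvalues λ₁ ≤ … ≤ λₙ and μ₁ ≤ … ≤ μₙ respectively, and suppose A = B + α⟨·, y⟩y for some α > 0 and vector y (a positive rank-one perturbation). Then the eigenvalues interlace: μ₁ ≤ λ₁ ≤ μ₂ ≤ λ₂ ≤ … ≤ μₙ ≤ λₙ. -/
open Polynomial
open scoped InnerProductSpace
open Matrix Submodule Module


open Polynomial Matrix

-- charpoly invariant under conjugation by invertible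
lemma charpoly_conj_aux {n : ℕ} (U D V : Matrix (Fin n) (Fin n) ℂ)
    (hUV : U * V = 1) (hVU : V * U = 1) :
    (U * D * V).charpoly = D.charpoly := by
  have hmap : ∀ M N : Matrix (Fin n) (Fin n) ℂ,
      (C : ℂ →+* ℂ[X]).mapMatrix (M * N) =
        (C : ℂ →+* ℂ[X]).mapMatrix M * (C : ℂ →+* ℂ[X]).mapMatrix N := fun M N => by
    simp [RingHom.map_mul]
  have key : charmatrix (U * D * V) =
      (C : ℂ →+* ℂ[X]).mapMatrix U * charmatrix D * (C : ℂ →+* ℂ[X]).mapMatrix V := by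
    simp only [charmatrix]
    rw [mul_sub, sub_mul]
    congr 1
    · have : (C : ℂ →+* ℂ[X]).mapMatrix U * Matrix.scalar (Fin n) (X : ℂ[X]) =
          Matrix.scalar (Fin n) (X : ℂ[X]) * (C : ℂ →+* ℂ[X]).mapMatrix U :=
        (Matrix.scalar_commute (X : ℂ[X]) (fun r => (Commute.all _ _)) _).symm
      rw [this, mul_assoc, ← hmap, hUV]
      simp
    · rw [← hmap, ← hmap]
  rw [Matrix.charpoly, Matrix.charpoly, key, det_mul, det_mul, mul_comm, ← mul_assoc, mul_comm (det _),
    ← det_mul, ← hmap, hUV]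
  simp

lemma charpoly_diag {n : ℕ} (d : Fin n → ℂ) :
    (Matrix.diagonal d).charpoly = ∏ j, (X - C (d j)) := by
  have : charmatrix (Matrix.diagonal d) = Matrix.diagonal fun j => (X : ℂ[X]) - C (d j) := by
    simp only [charmatrix, Matrix.scalar_apply]
    have : (C : ℂ →+* ℂ[X]).mapMatrix (Matrix.diagonal d) = Matrix.diagonal fun j => C (d j) := by
      simp [RingHom.mapMatrix_apply, Matrix.diagonal_map]
    rw [this, Matrix.diagonal_sub]
  rw [Matrix.charpoly, this, Matrix.det_diagonal]

lemma herm_charpoly {n : ℕ} {A : Matrix (Fin n) (Fin n) ℂ} (hA : A.IsHermitian) :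
    A.charpoly = ∏ j, (X - C (hA.eigenvalues j : ℂ)) := by
  have hU := hA.spectral_theorem
  rw [← charpoly_diag (fun j => (hA.eigenvalues j : ℂ))]
  conv_lhs => rw [hU]
  have h1 : (hA.eigenvectorUnitary : Matrix (Fin n) (Fin n) ℂ) * (star hA.eigenvectorUnitary : Matrix (Fin n) (Fin n) ℂ) = 1 := by
    simpa using Unitary.coe_mul_star_self hA.eigenvectorUnitary
  have h2 : (star hA.eigenvectorUnitary : Matrix (Fin n) (Fin n) ℂ) * (hA.eigenvectorUnitary : Matrix (Fin n) (Fin n) ℂ) = 1 := by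
    simpa using Unitary.coe_star_mul_self hA.eigenvectorUnitary
  rw [Unitary.conjStarAlgAut_apply, charpoly_conj_aux _ _ _ h1 h2]
  rfl

lemma multiset_of_charpoly {n : ℕ} (f g : Fin n → ℝ)
    (h : (∏ j : Fin n, (X - C (f j : ℂ))) = ∏ j : Fin n, (X - C (g j : ℂ))) :
    Finset.univ.val.map f = Finset.univ.val.map g := by
  have key : ∀ u : Fin n → ℝ, (∏ j : Fin n, (X - C (u j : ℂ))).roots
      = Finset.univ.val.map (fun j => (u j : ℂ)) := by
    intro u
    have : (∏ j : Fin n, (X - C (u j : ℂ)))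
        = (Multiset.map (fun a : ℂ => X - C a) (Finset.univ.val.map (fun j => (u j : ℂ)))).prod := by
      rw [Multiset.map_map]
      rfl
    rw [this, roots_multiset_prod_X_sub_C]
  have h2 : Finset.univ.val.map (fun j => (f j : ℂ)) = Finset.univ.val.map (fun j => (g j : ℂ)) := by
    rw [← key f, ← key g, h]
  apply Multiset.map_injective (Complex.ofReal_injective)
  rw [Multiset.map_map, Multiset.map_map]
  exact h2

lemma exists_perm_eq {n : ℕ} (f g : Fin n → ℝ) (hf : Monotone f)
    (h : Finset.univ.val.map f = Finset.univ.val.map g) :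
    ∃ σ : Equiv.Perm (Fin n), ∀ k, f k = g (σ k) := by
  refine ⟨Tuple.sort g, fun k => ?_⟩
  suffices hs : f = g ∘ Tuple.sort g by exact congrFun hs k
  apply List.ofFn_injective
  apply List.Perm.eq_of_sortedLE (List.sortedLE_ofFn_iff.mpr hf)
    (List.sortedLE_ofFn_iff.mpr (Tuple.monotone_sort g))
  rw [← Multiset.coe_eq_coe, ← Fin.univ_val_map, ← Fin.univ_val_map, h]
  have : Finset.univ.val.map (g ∘ Tuple.sort g)
      = Multiset.map g (Multiset.map (Tuple.sort g) Finset.univ.val) := by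
    rw [Multiset.map_map]
  rw [this, Multiset.map_univ_val_equiv]

variable {n : ℕ}

local notation "E" => EuclideanSpace ℂ (Fin n)

lemma repr_span_zero (b : OrthonormalBasis (Fin n) ℂ E)
    (S : Set (Fin n)) {x : EuclideanSpace ℂ (Fin n)} (hx : x ∈ span ℂ (b '' S)) {k : Fin n}
    (hk : k ∉ S) : b.repr x k = 0 := by
  rw [b.repr_apply_apply]
  induction hx using Submodule.span_induction with
  | mem z hz =>
    obtain ⟨m, hm, rfl⟩ := hz
    exact b.orthonormal.2 (fun h => hk (h ▸ hm))
  | zero => exact inner_zero_right _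
  | add u v hu hv ihu ihv => rw [inner_add_right, ihu, ihv, add_zero]
  | smul c u hu ihu => rw [inner_smul_right, ihu, mul_zero]

lemma norm_sq_repr (b : OrthonormalBasis (Fin n) ℂ E) (x : EuclideanSpace ℂ (Fin n)) :
    ‖x‖ ^ 2 = ∑ k, ‖b.repr x k‖ ^ 2 := by
  rw [← b.repr.norm_map x, EuclideanSpace.norm_eq,
    Real.sq_sqrt (Finset.sum_nonneg fun k _ => sq_nonneg _)]

lemma quad_repr (A : Matrix (Fin n) (Fin n) ℂ) (b : OrthonormalBasis (Fin n) ℂ E)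
    (ev : Fin n → ℝ) (hb : ∀ k, Matrix.toEuclideanLin A (b k) = (ev k : ℂ) • b k)
    (x : EuclideanSpace ℂ (Fin n)) :
    (⟪x, Matrix.toEuclideanLin A x⟫_ℂ).re = ∑ k, ev k * ‖b.repr x k‖ ^ 2 := by
  have hx : x = ∑ k, b.repr x k • b k := (b.sum_repr x).symm
  have hAx : Matrix.toEuclideanLin A x = ∑ k, ((ev k : ℂ) * b.repr x k) • b k := by
    conv_lhs => rw [hx]
    rw [map_sum]
    refine Finset.sum_congr rfl fun k _ => ?_
    rw [_root_.map_smul, hb k, smul_smul, mul_comm]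
  rw [hAx]
  nth_rewrite 1 [hx]
  rw [b.orthonormal.inner_sum]
  rw [Complex.re_sum]
  refine Finset.sum_congr rfl fun k _ => ?_
  have h1 : (starRingEnd ℂ) (b.repr x k) * ((ev k : ℂ) * b.repr x k)
      = (ev k : ℂ) * ((Complex.normSq (b.repr x k) : ℝ) : ℂ) := by
    rw [← Complex.mul_conj]; ring
  rw [h1, ← Complex.ofReal_mul, Complex.ofReal_re, Complex.normSq_eq_norm_sq]

lemma quad_le (A : Matrix (Fin n) (Fin n) ℂ) (b : OrthonormalBasis (Fin n) ℂ E)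
    (ev : Fin n → ℝ) (hb : ∀ k, Matrix.toEuclideanLin A (b k) = (ev k : ℂ) • b k)
    (x : EuclideanSpace ℂ (Fin n)) (r : ℝ) (h : ∀ k, ev k ≤ r ∨ b.repr x k = 0) :
    (⟪x, Matrix.toEuclideanLin A x⟫_ℂ).re ≤ r * ‖x‖ ^ 2 := by
  rw [quad_repr A b ev hb x, norm_sq_repr b x, Finset.mul_sum]
  refine Finset.sum_le_sum fun k _ => ?_
  rcases h k with h | h
  · exact mul_le_mul_of_nonneg_right h (sq_nonneg _)
  · simp [h]

lemma quad_ge (A : Matrix (Fin n) (Fin n) ℂ) (b : OrthonormalBasis (Fin n) ℂ E)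
    (ev : Fin n → ℝ) (hb : ∀ k, Matrix.toEuclideanLin A (b k) = (ev k : ℂ) • b k)
    (x : EuclideanSpace ℂ (Fin n)) (r : ℝ) (h : ∀ k, r ≤ ev k ∨ b.repr x k = 0) :
    r * ‖x‖ ^ 2 ≤ (⟪x, Matrix.toEuclideanLin A x⟫_ℂ).re := by
  rw [quad_repr A b ev hb x, norm_sq_repr b x, Finset.mul_sum]
  refine Finset.sum_le_sum fun k _ => ?_
  rcases h k with h | h
  · exact mul_le_mul_of_nonneg_right h (sq_nonneg _)
  · simp [h]

lemma finrank_span_onb (b : OrthonormalBasis (Fin n) ℂ E) (T : Finset (Fin n)) :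
    finrank ℂ (span ℂ (b '' ↑T)) = T.card := by
  classical
  have li : LinearIndependent ℂ (fun k : ↥T => b k) :=
    b.orthonormal.linearIndependent.comp _ Subtype.val_injective
  have him : b '' ↑T = Set.range (fun k : ↥T => b k) := Set.image_eq_range _ _
  rw [him, finrank_span_eq_card li, Fintype.card_coe]

lemma exists_common (U V : Submodule ℂ (EuclideanSpace ℂ (Fin n)))
    (h : n < finrank ℂ U + finrank ℂ V) :
    ∃ x : EuclideanSpace ℂ (Fin n), x ∈ U ∧ x ∈ V ∧ x ≠ 0 := by
  have hsum := Submodule.finrank_sup_add_finrank_inf_eq U V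
  have hle : finrank ℂ ↥(U ⊔ V) ≤ n := by
    simpa [finrank_euclideanSpace_fin] using Submodule.finrank_le (U ⊔ V)
  have hpos : 0 < finrank ℂ ↥(U ⊓ V) := by omega
  have hne : U ⊓ V ≠ ⊥ := by
    intro hbot
    rw [hbot, finrank_bot] at hpos
    omega
  obtain ⟨x, hx, hx0⟩ := Submodule.exists_mem_ne_zero_of_ne_bot hne
  exact ⟨x, hx.1, hx.2, hx0⟩


theorem stmt_4 (n : ℕ) (A B : Matrix (Fin n) (Fin n) ℂ)
    (hA : A.IsHermitian) (hB : B.IsHermitian)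
    (lam mu : Fin n → ℝ) (hlam : Monotone lam) (hmu : Monotone mu)
    (hlamEig : A.charpoly = ∏ j : Fin n, (X - C (lam j : ℂ)))
    (hmuEig : B.charpoly = ∏ j : Fin n, (X - C (mu j : ℂ)))
    (α : ℝ) (hα : 0 < α) (y : Fin n → ℂ)
    (hAB : ∀ x : Fin n → ℂ, A.mulVec x = B.mulVec x + (α : ℂ) • (dotProduct x (star y)) • y) :
    (∀ j : Fin n, mu j ≤ lam j) ∧
    (∀ i j : Fin n, (i : ℕ) + 1 = (j : ℕ) → lam i ≤ mu j) := by
  classical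
  -- sorted eigenvalue identification
  obtain ⟨σA, hσA⟩ := exists_perm_eq lam hA.eigenvalues hlam
    (multiset_of_charpoly _ _ (hlamEig.symm.trans (herm_charpoly hA)))
  obtain ⟨σB, hσB⟩ := exists_perm_eq mu hB.eigenvalues hmu
    (multiset_of_charpoly _ _ (hmuEig.symm.trans (herm_charpoly hB)))
  set bA := hA.eigenvectorBasis with hbAdef
  set bB := hB.eigenvectorBasis with hbBdef
  -- eigenvector equations for toEuclideanLin
  have hbA : ∀ k, Matrix.toEuclideanLin A (bA k) = ((hA.eigenvalues k : ℝ) : ℂ) • bA k := by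
    intro k
    ext i
    simp [Matrix.toEuclideanLin_apply, hA.mulVec_eigenvectorBasis k, Complex.real_smul]
    have h := congrFun (hA.mulVec_eigenvectorBasis k) i
    simp only [Pi.smul_apply, Complex.real_smul] at h
    exact h
  have hbB : ∀ k, Matrix.toEuclideanLin B (bB k) = ((hB.eigenvalues k : ℝ) : ℂ) • bB k := by
    intro k
    ext i
    simp [Matrix.toEuclideanLin_apply, hB.mulVec_eigenvectorBasis k, Complex.real_smul]
    have h := congrFun (hB.mulVec_eigenvectorBasis k) i
    simp only [Pi.smul_apply, Complex.real_smul] at h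
    exact h
  set y' : EuclideanSpace ℂ (Fin n) := (WithLp.equiv 2 (Fin n → ℂ)).symm y with hy'
  -- the key quadratic identity
  have key : ∀ x : EuclideanSpace ℂ (Fin n),
      ⟪x, Matrix.toEuclideanLin A x⟫_ℂ = ⟪x, Matrix.toEuclideanLin B x⟫_ℂ
        + (α : ℂ) * ((Complex.normSq ⟪x, y'⟫_ℂ : ℝ) : ℂ) := by
    intro x
    have hzz : ⟪x, y'⟫_ℂ = ∑ i, (starRingEnd ℂ) (x i) * y i := by
      rw [PiLp.inner_apply]
      simp [hy', mul_comm]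
    have hz : dotProduct (WithLp.ofLp x) (star y)
        = (starRingEnd ℂ) (∑ i, (starRingEnd ℂ) (x i) * y i) := by
      rw [map_sum, dotProduct]
      refine Finset.sum_congr rfl fun i _ => ?_
      simp [mul_comm]
    rw [hzz]
    simp only [Matrix.toEuclideanLin_apply, PiLp.inner_apply, RCLike.inner_apply',
      WithLp.equiv_symm_apply]
    rw [hAB]
    simp only [Pi.add_apply, Pi.smul_apply, smul_eq_mul, mul_add]
    rw [Finset.sum_add_distrib]
    congr 1
    have hterm : ∀ i, (starRingEnd ℂ) (x i) * ((α : ℂ) * (dotProduct (WithLp.ofLp x) (star y) * y i))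
        = (α : ℂ) * dotProduct (WithLp.ofLp x) (star y) * ((starRingEnd ℂ) (x i) * y i) := by
      intro i; ring
    rw [Finset.sum_congr rfl fun i _ => hterm i, ← Finset.mul_sum, hz, mul_assoc,
      mul_comm ((starRingEnd ℂ) _) _, Complex.mul_conj]
  -- PSD comparison
  have psd : ∀ x : EuclideanSpace ℂ (Fin n),
      (⟪x, Matrix.toEuclideanLin B x⟫_ℂ).re ≤ (⟪x, Matrix.toEuclideanLin A x⟫_ℂ).re := by
    intro x
    rw [key x, Complex.add_re, ← Complex.ofReal_mul, Complex.ofReal_re]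
    nlinarith [Complex.normSq_nonneg (⟪x, y'⟫_ℂ), hα]
  have hcardE : finrank ℂ (EuclideanSpace ℂ (Fin n)) = n := finrank_euclideanSpace_fin
  refine ⟨?_, ?_⟩
  · -- mu j ≤ lam j
    intro j
    set TL : Finset (Fin n) := Finset.image σA (Finset.Iic j) with hTL
    set TH : Finset (Fin n) := Finset.image σB (Finset.Ici j) with hTH
    have hcount : n < finrank ℂ ↥(span ℂ (⇑bA '' ↑TL)) + finrank ℂ ↥(span ℂ (⇑bB '' ↑TH)) := by
      rw [finrank_span_onb, finrank_span_onb, hTL, hTH,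
        Finset.card_image_of_injective _ σA.injective,
        Finset.card_image_of_injective _ σB.injective, Fin.card_Iic, Fin.card_Ici]
      have := j.isLt
      omega
    obtain ⟨x, hxV, hxW, hx0⟩ := exists_common (span ℂ (bA '' ↑TL)) (span ℂ (bB '' ↑TH)) hcount
    · have hup : (⟪x, Matrix.toEuclideanLin A x⟫_ℂ).re ≤ lam j * ‖x‖ ^ 2 := by
        refine quad_le A bA hA.eigenvalues hbA x (lam j) fun k => ?_
        by_cases hk : k ∈ (↑TL : Set (Fin n))
        · left
          rw [Finset.mem_coe, hTL, Finset.mem_image] at hk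
          obtain ⟨m, hm, rfl⟩ := hk
          rw [← hσA m]
          exact hlam (Finset.mem_Iic.mp hm)
        · exact Or.inr (repr_span_zero bA _ hxV hk)
      have hdown : mu j * ‖x‖ ^ 2 ≤ (⟪x, Matrix.toEuclideanLin B x⟫_ℂ).re := by
        refine quad_ge B bB hB.eigenvalues hbB x (mu j) fun k => ?_
        by_cases hk : k ∈ (↑TH : Set (Fin n))
        · left
          rw [Finset.mem_coe, hTH, Finset.mem_image] at hk
          obtain ⟨m, hm, rfl⟩ := hk
          rw [← hσB m]
          exact hmu (Finset.mem_Ici.mp hm)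
        · exact Or.inr (repr_span_zero bB _ hxW hk)
      have hchain : mu j * ‖x‖ ^ 2 ≤ lam j * ‖x‖ ^ 2 :=
        le_trans hdown (le_trans (psd x) hup)
      have hpos : (0 : ℝ) < ‖x‖ ^ 2 := pow_pos (norm_pos_iff.mpr hx0) 2
      exact le_of_mul_le_mul_right hchain hpos
  · -- lam i ≤ mu j when j = i+1
    intro i j hij
    set TL : Finset (Fin n) := Finset.image σB (Finset.Iic j) with hTL
    set TH : Finset (Fin n) := Finset.image σA (Finset.Ici i) with hTH
    set VB := span ℂ (bB '' ↑TL) with hVB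
    set WA := span ℂ (bA '' ↑TH) with hWA
    set P := (ℂ ∙ y')ᗮ with hP
    have hfinP : n - 1 ≤ finrank ℂ ↥P := by
      have h1 : finrank ℂ ↥(ℂ ∙ y') + finrank ℂ ↥P = n := by
        rw [hP, Submodule.finrank_add_finrank_orthogonal, hcardE]
      have h2 : finrank ℂ ↥(ℂ ∙ y') ≤ 1 := by
        by_cases hy0 : y' = 0
        · rw [hy0, Submodule.span_zero_singleton]
          simp
        · rw [finrank_span_singleton hy0]
      omega
    have hinf : (↑i : ℕ) + 1 ≤ finrank ℂ ↥(VB ⊓ P) := by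
      have hsum := Submodule.finrank_sup_add_finrank_inf_eq VB P
      have hle : finrank ℂ ↥(VB ⊔ P) ≤ n := by
        simpa [hcardE] using Submodule.finrank_le (VB ⊔ P)
      have hVBrank : finrank ℂ ↥VB = (↑j : ℕ) + 1 := by
        rw [hVB, finrank_span_onb, hTL, Finset.card_image_of_injective _ σB.injective,
          Fin.card_Iic]
      have := j.isLt
      omega
    have hWArank : finrank ℂ ↥WA = n - (↑i : ℕ) := by
      rw [hWA, finrank_span_onb, hTH, Finset.card_image_of_injective _ σA.injective,
        Fin.card_Ici]
    have hcount : n < finrank ℂ ↥(VB ⊓ P) + finrank ℂ ↥WA := by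
      rw [hWArank]
      have := i.isLt
      omega
    obtain ⟨x, hxV, hxW, hx0⟩ := exists_common (VB ⊓ P) WA hcount
    · have hxVB : x ∈ VB := hxV.1
      have hxP : x ∈ P := hxV.2
      have hzero : ⟪x, y'⟫_ℂ = 0 := by
        have := (Submodule.mem_orthogonal' _ _).mp hxP y' (Submodule.mem_span_singleton_self y')
        exact this
      have heq : (⟪x, Matrix.toEuclideanLin A x⟫_ℂ).re
          = (⟪x, Matrix.toEuclideanLin B x⟫_ℂ).re := by
        rw [key x, hzero]
        simp
      have hup : (⟪x, Matrix.toEuclideanLin B x⟫_ℂ).re ≤ mu j * ‖x‖ ^ 2 := by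
        refine quad_le B bB hB.eigenvalues hbB x (mu j) fun k => ?_
        by_cases hk : k ∈ (↑TL : Set (Fin n))
        · left
          rw [Finset.mem_coe, hTL, Finset.mem_image] at hk
          obtain ⟨m, hm, rfl⟩ := hk
          rw [← hσB m]
          exact hmu (Finset.mem_Iic.mp hm)
        · exact Or.inr (repr_span_zero bB _ hxVB hk)
      have hdown : lam i * ‖x‖ ^ 2 ≤ (⟪x, Matrix.toEuclideanLin A x⟫_ℂ).re := by
        refine quad_ge A bA hA.eigenvalues hbA x (lam i) fun k => ?_
        by_cases hk : k ∈ (↑TH : Set (Fin n))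
        · left
          rw [Finset.mem_coe, hTH, Finset.mem_image] at hk
          obtain ⟨m, hm, rfl⟩ := hk
          rw [← hσA m]
          exact hlam (Finset.mem_Ici.mp hm)
        · exact Or.inr (repr_span_zero bA _ hxW hk)
      have hchain : lam i * ‖x‖ ^ 2 ≤ mu j * ‖x‖ ^ 2 := by
        calc lam i * ‖x‖ ^ 2 ≤ (⟪x, Matrix.toEuclideanLin A x⟫_ℂ).re := hdown
          _ = (⟪x, Matrix.toEuclideanLin B x⟫_ℂ).re := heq
          _ ≤ mu j * ‖x‖ ^ 2 := hup
      have hpos : (0 : ℝ) < ‖x‖ ^ 2 := pow_pos (norm_pos_iff.mpr hx0) 2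
      exact le_of_mul_le_mul_right hchain hpos
end

section
/- Let f : [a,b] → ℝ be C² and monotone with |f''(x)| ≥ C > 0 for all x ∈ (a,b). Then the measure of {x ∈ [a,b] : |f(x)| ≤ ε} is at most 2√(ε/C) up to an absolute constant, i.e. ≲ (ε/C)^{1/2}. -/
open MeasureTheory Set

private lemma contDiffAt_deriv_aux {f : ℝ → ℝ} {x : ℝ} (h : ContDiffAt ℝ 2 f x) :
    ContDiffAt ℝ 1 (deriv f) x := by
  have h1 : ContDiffAt ℝ 1 (fderiv ℝ f) x := h.fderiv_right (by norm_num)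
  have h2 : ContDiffAt ℝ 1 (fun y => fderiv ℝ f y 1) x := h1.clm_apply contDiffAt_const
  simpa only [fderiv_apply_one_eq_deriv] using h2

private lemma deriv2_neg (f : ℝ → ℝ) (x : ℝ) :
    deriv (deriv (fun y => -f y)) x = -deriv (deriv f) x := by
  rw [show deriv (fun y => -f y) = fun y => -deriv f y from funext fun _ => deriv.fun_neg]
  exact deriv.fun_neg

private lemma deriv2_refl (f : ℝ → ℝ) (c x : ℝ) :
    deriv (deriv (fun y => f (c - y))) x = deriv (deriv f) (c - x) := by
  have h1 : deriv (fun y => f (c - y)) = fun y => -deriv f (c - y) :=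
    funext fun y => deriv_comp_const_sub f c y
  rw [h1]
  have h2 : deriv (fun y => -deriv f (c - y)) x = -deriv (fun y => deriv f (c - y)) x :=
    deriv.fun_neg
  rw [h2, deriv_comp_const_sub, neg_neg]

private lemma core_lemma (a b C ε : ℝ) (f : ℝ → ℝ)
    (hf : ContDiffOn ℝ 2 f (Set.Icc a b))
    (hmono : MonotoneOn f (Set.Icc a b)) (hC : 0 < C)
    (hpos : ∀ x ∈ Set.Ioo a b, C ≤ deriv (deriv f) x) (hε : 0 < ε)
    (u v : ℝ) (hu : u ∈ Set.Icc a b) (hv : v ∈ Set.Icc a b) (huv : u < v)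
    (hfu : |f u| ≤ ε) (hfv : |f v| ≤ ε) : v - u ≤ 2 * Real.sqrt (ε / C) := by
  have hsub : Icc u v ⊆ Icc a b := Icc_subset_Icc hu.1 hv.2
  have hsub' : Ioo u v ⊆ Ioo a b := fun x hx =>
    ⟨lt_of_le_of_lt hu.1 hx.1, lt_of_lt_of_le hx.2 hv.2⟩
  have hf2 : ContDiffOn ℝ 2 f (Icc u v) := hf.mono hsub
  have hf1 : ContDiffOn ℝ 1 f (Icc u v) := hf2.of_le (by norm_num)
  have heq : ∀ y ∈ Ioo u v, iteratedDerivWithin 1 f (Icc u v) y = deriv f y := by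
    intro y hy
    rw [iteratedDerivWithin_one,
      derivWithin_of_mem_nhds (Icc_mem_nhds hy.1 hy.2)]
  have hdiff : DifferentiableOn ℝ (iteratedDerivWithin 1 f (Icc u v)) (Ioo u v) := by
    intro y hy
    have h2 : ContDiffAt ℝ 2 f y :=
      hf.contDiffAt (Icc_mem_nhds (hsub' hy).1 (hsub' hy).2)
    have hdy : DifferentiableAt ℝ (deriv f) y :=
      (contDiffAt_deriv_aux h2).differentiableAt one_ne_zero
    have hev : iteratedDerivWithin 1 f (Icc u v) =ᶠ[nhds y] deriv f :=
      Filter.eventuallyEq_of_mem (Ioo_mem_nhds hy.1 hy.2) heq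
    exact (hdy.congr_of_eventuallyEq hev).differentiableWithinAt
  obtain ⟨ξ, hξ, htay⟩ := taylor_mean_remainder_lagrange (n := 1) huv.ne
    (by rwa [uIcc_of_le huv.le]) (by rwa [uIcc_of_le huv.le, uIoo_of_le huv.le])
  rw [uIcc_of_le huv.le] at htay
  rw [uIoo_of_le huv.le] at hξ
  have htp : taylorWithinEval f 1 (Icc u v) u v
      = f u + derivWithin f (Icc u v) u * (v - u) := by
    rw [taylorWithinEval_succ, taylor_within_zero_eval,
      iteratedDerivWithin_one]
    simp [smul_eq_mul]
    ring
  have hev : iteratedDerivWithin 1 f (Icc u v) =ᶠ[nhds ξ] deriv f :=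
    Filter.eventuallyEq_of_mem (Ioo_mem_nhds hξ.1 hξ.2) heq
  have hd2 : iteratedDerivWithin 2 f (Icc u v) ξ = deriv (deriv f) ξ := by
    rw [show (2 : ℕ) = 1 + 1 from rfl,
      iteratedDerivWithin_succ,
      derivWithin_of_mem_nhds (Icc_mem_nhds hξ.1 hξ.2)]
    exact hev.deriv_eq
  have hd0 : 0 ≤ derivWithin f (Icc u v) u := by
    have hdw : HasDerivWithinAt f (derivWithin f (Icc u v) u) (Icc u v) u :=
      ((hf1.differentiableOn one_ne_zero) u (left_mem_Icc.mpr huv.le)).hasDerivWithinAt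
    rw [hasDerivWithinAt_iff_tendsto_slope] at hdw
    have hne : (nhdsWithin u (Icc u v \ {u})).NeBot := by
      rw [Icc_diff_left]
      refine mem_closure_iff_nhdsWithin_neBot.mp ?_
      rw [closure_Ioc huv.ne]
      exact left_mem_Icc.mpr huv.le
    refine ge_of_tendsto hdw ?_
    filter_upwards [eventually_mem_nhdsWithin] with y hy
    have hy1 : u < y := lt_of_le_of_ne hy.1.1 (fun h => hy.2 h.symm)
    rw [slope_def_field]
    apply div_nonneg _ (by linarith)
    have := hmono (hsub (left_mem_Icc.mpr huv.le)) (hsub hy.1) hy.1.1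
    linarith
  have hCξ : C ≤ deriv (deriv f) ξ := hpos ξ (hsub' hξ)
  rw [htp] at htay
  have habs_u : -ε ≤ f u := (abs_le.mp hfu).1
  have habs_v : f v ≤ ε := (abs_le.mp hfv).2
  have key : C / 2 * (v - u) ^ 2 ≤ 2 * ε := by
    have h1 : f v - (f u + derivWithin f (Icc u v) u * (v - u))
        = deriv (deriv f) ξ * (v - u) ^ 2 / 2 := by
      rw [htay]
      norm_num [Nat.factorial, hd2]
    nlinarith [sq_nonneg (v - u), mul_nonneg hd0 (le_of_lt (sub_pos.mpr huv))]
  have h4 : (v - u) ^ 2 ≤ 4 * (ε / C) := by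
    rw [mul_div_assoc', le_div_iff₀ hC]
    nlinarith
  calc v - u = Real.sqrt ((v - u) ^ 2) := (Real.sqrt_sq (by linarith)).symm
    _ ≤ Real.sqrt (4 * (ε / C)) := Real.sqrt_le_sqrt h4
    _ = 2 * Real.sqrt (ε / C) := by
        rw [show (4 : ℝ) * (ε / C) = 2 ^ 2 * (ε / C) by ring,
          Real.sqrt_mul (by positivity), Real.sqrt_sq (by norm_num)]

theorem stmt_15 (a b : ℝ) (hab : a ≤ b) (f : ℝ → ℝ)
    (hf : ContDiffOn ℝ 2 f (Set.Icc a b))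
    (hmono : MonotoneOn f (Set.Icc a b) ∨ AntitoneOn f (Set.Icc a b))
    (C : ℝ) (hC : 0 < C)
    (hf'' : ∀ x ∈ Set.Ioo a b, C ≤ |deriv (deriv f) x|)
    (ε : ℝ) (hε : 0 < ε) :
    volume {x ∈ Set.Icc a b | |f x| ≤ ε} ≤ ENNReal.ofReal (2 * Real.sqrt (ε / C)) := by
  set B := 2 * Real.sqrt (ε / C) with hBdef
  have hB : 0 ≤ B := by positivity
  set S := {x ∈ Set.Icc a b | |f x| ≤ ε} with hSdef
  by_cases hS : S.Nonempty
  swap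
  · rw [not_nonempty_iff_eq_empty] at hS
    rw [hS, measure_empty]
    exact zero_le
  -- key distance bound
  have key : ∀ u ∈ S, ∀ v ∈ S, u < v → v - u ≤ B := by
    intro u huS v hvS huv
    obtain ⟨hu, hfu⟩ := huS
    obtain ⟨hv, hfv⟩ := hvS
    -- continuity of second derivative on Ioo a b
    have hg : ContDiffOn ℝ 1 (deriv f) (Set.Ioo a b) := fun x hx =>
      (contDiffAt_deriv_aux (hf.contDiffAt (Icc_mem_nhds hx.1 hx.2))).contDiffWithinAt
    have hcont : ContinuousOn (deriv (deriv f)) (Set.Ioo a b) :=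
      hg.continuousOn_deriv_of_isOpen isOpen_Ioo le_rfl
    -- sign constancy
    have hsign : (∀ x ∈ Set.Ioo a b, C ≤ deriv (deriv f) x)
        ∨ (∀ x ∈ Set.Ioo a b, deriv (deriv f) x ≤ -C) := by
      by_contra h
      push_neg at h
      obtain ⟨⟨x, hx, hx'⟩, ⟨y, hy, hy'⟩⟩ := h
      have hxle : deriv (deriv f) x ≤ -C := by
        rcases le_abs.mp (hf'' x hx) with h1 | h1
        · linarith
        · linarith
      have hyge : C ≤ deriv (deriv f) y := by
        rcases le_abs.mp (hf'' y hy) with h1 | h1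
        · linarith
        · linarith
      have hxy : Set.uIcc x y ⊆ Set.Ioo a b :=
        Set.ordConnected_Ioo.uIcc_subset hx hy
      have h0 : (0 : ℝ) ∈ Set.uIcc (deriv (deriv f) x) (deriv (deriv f) y) := by
        rw [Set.mem_uIcc]
        left
        constructor <;> linarith
      obtain ⟨z, hz, hz0⟩ := intermediate_value_uIcc (hcont.mono hxy) h0
      have := hf'' z (hxy hz)
      rw [hz0] at this
      simp at this
      linarith
    -- reflection map facts
    have hrefl_cd : ContDiffOn ℝ 2 (fun y => f (a + b - y)) (Set.Icc a b) := by
      refine hf.comp ((contDiff_const.sub contDiff_id).contDiffOn) ?_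
      intro y hy
      exact ⟨by simpa using sub_le_sub_left hy.2 (a + b),
        by simpa using sub_le_sub_left hy.1 (a + b)⟩
    have hrefl_mem : ∀ y ∈ Set.Icc a b, a + b - y ∈ Set.Icc a b := fun y hy =>
      ⟨by linarith [hy.2], by linarith [hy.1]⟩
    have hrefl_mem' : ∀ y ∈ Set.Ioo a b, a + b - y ∈ Set.Ioo a b := fun y hy =>
      ⟨by linarith [hy.2], by linarith [hy.1]⟩
    have huv' : a + b - v < a + b - u := by linarith
    have e1 : a + b - (a + b - v) = v := by ring
    have e2 : a + b - (a + b - u) = u := by ring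
    rcases hmono with hm | hm <;> rcases hsign with hs | hs
    · -- monotone, f'' ≥ C
      linarith [core_lemma a b C ε f hf hm hC hs hε u v hu hv huv hfu hfv]
    · -- monotone, f'' ≤ -C : use g y = -f (a+b-y)
      set g : ℝ → ℝ := fun y => -f (a + b - y) with hgdef
      have hg_cd : ContDiffOn ℝ 2 g (Set.Icc a b) := hrefl_cd.neg
      have hg_mono : MonotoneOn g (Set.Icc a b) := by
        intro x hx y hy hxy
        have := hm (hrefl_mem y hy) (hrefl_mem x hx) (by linarith)
        simp only [hgdef]
        linarith
      have hg_pos : ∀ x ∈ Set.Ioo a b, C ≤ deriv (deriv g) x := by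
        intro x hx
        have : deriv (deriv g) x = -deriv (deriv f) (a + b - x) := by
          rw [show g = fun y => -(fun z => f (a + b - z)) y from rfl, deriv2_neg,
            deriv2_refl]
        rw [this]
        linarith [hs (a + b - x) (hrefl_mem' x hx)]
      have hgv : |g (a + b - v)| ≤ ε := by simp only [hgdef, e1, abs_neg]; exact hfv
      have hgu : |g (a + b - u)| ≤ ε := by simp only [hgdef, e2, abs_neg]; exact hfu
      have := core_lemma a b C ε g hg_cd hg_mono hC hg_pos hε
        (a + b - v) (a + b - u) (hrefl_mem v hv) (hrefl_mem u hu) huv' hgv hgu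
      linarith
    · -- antitone, f'' ≥ C : use g y = f (a+b-y)
      set g : ℝ → ℝ := fun y => f (a + b - y) with hgdef
      have hg_mono : MonotoneOn g (Set.Icc a b) := by
        intro x hx y hy hxy
        exact hm (hrefl_mem y hy) (hrefl_mem x hx) (by linarith)
      have hg_pos : ∀ x ∈ Set.Ioo a b, C ≤ deriv (deriv g) x := by
        intro x hx
        rw [show deriv (deriv g) x = deriv (deriv f) (a + b - x) from deriv2_refl f (a + b) x]
        exact hs (a + b - x) (hrefl_mem' x hx)
      have hgv : |g (a + b - v)| ≤ ε := by simp only [hgdef, e1]; exact hfv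
      have hgu : |g (a + b - u)| ≤ ε := by simp only [hgdef, e2]; exact hfu
      have := core_lemma a b C ε g hrefl_cd hg_mono hC hg_pos hε
        (a + b - v) (a + b - u) (hrefl_mem v hv) (hrefl_mem u hu) huv' hgv hgu
      linarith
    · -- antitone, f'' ≤ -C : use g = -f
      set g : ℝ → ℝ := fun y => -f y with hgdef
      have hg_cd : ContDiffOn ℝ 2 g (Set.Icc a b) := hf.neg
      have hg_mono : MonotoneOn g (Set.Icc a b) := by
        intro x hx y hy hxy
        have := hm hx hy hxy
        simp only [hgdef]
        linarith
      have hg_pos : ∀ x ∈ Set.Ioo a b, C ≤ deriv (deriv g) x := by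
        intro x hx
        rw [show deriv (deriv g) x = -deriv (deriv f) x from deriv2_neg f x]
        linarith [hs x hx]
      have hgu : |g u| ≤ ε := by simpa only [hgdef, abs_neg] using hfu
      have hgv : |g v| ≤ ε := by simpa only [hgdef, abs_neg] using hfv
      linarith [core_lemma a b C ε g hg_cd hg_mono hC hg_pos hε u v hu hv huv hgu hgv]
  -- conclude via closedness and boundedness
  have hScl : IsClosed S := by
    have : S = Set.Icc a b ∩ (fun x => |f x|) ⁻¹' Set.Iic ε := by
      ext x; simp [hSdef, and_comm]
    rw [this]
    exact (continuous_abs.comp_continuousOn hf.continuousOn).preimage_isClosed_of_isClosed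
      isClosed_Icc isClosed_Iic
  have hSsub : S ⊆ Set.Icc a b := fun x hx => hx.1
  have hbddb : BddBelow S := (bddBelow_Icc (a := b) (b := a)).mono hSsub
  have hbdda : BddAbove S := (bddAbove_Icc (a := a) (b := b)).mono hSsub
  have hm : sInf S ∈ S := hScl.csInf_mem hS hbddb
  have hM : sSup S ∈ S := hScl.csSup_mem hS hbdda
  have hsubS : S ⊆ Set.Icc (sInf S) (sSup S) := fun x hx =>
    ⟨csInf_le hbddb hx, le_csSup hbdda hx⟩
  have hMm : sSup S - sInf S ≤ B := by
    rcases lt_or_ge (sInf S) (sSup S) with h | h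
    · exact key _ hm _ hM h
    · linarith
  calc volume S ≤ volume (Set.Icc (sInf S) (sSup S)) := measure_mono hsubS
    _ = ENNReal.ofReal (sSup S - sInf S) := Real.volume_Icc
    _ ≤ ENNReal.ofReal B := ENNReal.ofReal_le_ofReal hMm
end

section
/- Let f : [a,b] → ℝ be C³ with |f'(x)| + |f''(x)| ≥ C and |f''(x)| + |f'''(x)| ≤ κ for all x. Then for ε ≲ C ≲ κ(b−a), the measure of {x ∈ [a,b] : |f(x)| ≤ ε} is ≲ (κ/C)·(ε/C)^{1/2}·(b−a). -/
open MeasureTheory Set BigOperators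

lemma vol_le_of_dist (S : Set ℝ) (d : ℝ)
    (h : ∀ x ∈ S, ∀ y ∈ S, |x - y| ≤ d) :
    volume S ≤ ENNReal.ofReal d :=
  (Real.volume_le_diam S).trans (EMetric.diam_le fun x hx y hy => by
    rw [edist_dist, Real.dist_eq]
    exact ENNReal.ofReal_le_ofReal (h x hx y hy))

lemma sublevel_mono (S : Set ℝ) (φ φ' : ℝ → ℝ) (lam ε : ℝ) (hlam : 0 < lam) (hε : 0 ≤ ε)
    (hder : ∀ x ∈ S, ∀ y ∈ S, ∀ c ∈ Set.Icc x y, HasDerivAt φ (φ' c) c)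
    (hpos : ∀ x ∈ S, ∀ y ∈ S, ∀ c ∈ Set.Icc x y, lam ≤ φ' c)
    (hsmall : ∀ x ∈ S, |φ x| ≤ ε) :
    volume S ≤ ENNReal.ofReal (2 * ε / lam) := by
  apply vol_le_of_dist
  have key : ∀ x ∈ S, ∀ y ∈ S, x ≤ y → y - x ≤ 2 * ε / lam := by
    intro x hx y hy hxy
    rcases eq_or_lt_of_le hxy with rfl | hlt
    · simp only [sub_self]
      positivity
    · obtain ⟨c, hc, hslope⟩ := exists_hasDerivAt_eq_slope φ φ' hlt
        (fun c hc => ((hder x hx y hy c hc).continuousAt).continuousWithinAt)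
        (fun c hc => hder x hx y hy c (Ioo_subset_Icc_self hc))
      have h1 : lam ≤ (φ y - φ x) / (y - x) := hslope ▸ hpos x hx y hy c (Ioo_subset_Icc_self hc)
      have h2 : φ y - φ x ≤ 2 * ε := by
        have hax := abs_le.1 (hsmall x hx)
        have hay := abs_le.1 (hsmall y hy)
        linarith [hax.1, hay.2]
      rw [le_div_iff₀ (by linarith)] at h1
      rw [le_div_iff₀ hlam]
      nlinarith
  intro x hx y hy
  rcases le_total x y with h | h
  · rw [abs_sub_comm, abs_of_nonneg (by linarith)]
    exact key x hx y hy h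
  · rw [abs_of_nonneg (by linarith)]
    exact key y hy x hx h

lemma prop_bound (a b : ℝ) (φ φ' : ℝ → ℝ) (κ : ℝ)
    (hd : ∀ x ∈ Set.Ioo a b, HasDerivAt φ (φ' x) x)
    (hb : ∀ x ∈ Set.Ioo a b, |φ' x| ≤ κ)
    (x y : ℝ) (hx : x ∈ Set.Ioo a b) (hy : y ∈ Set.Ioo a b) :
    |φ y - φ x| ≤ κ * |y - x| := by
  have hsub : Set.uIcc x y ⊆ Set.Ioo a b := Set.ordConnected_Ioo.uIcc_subset hx hy
  have := Convex.norm_image_sub_le_of_norm_hasDerivWithin_le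
    (f := φ) (f' := φ') (C := κ) (s := Set.uIcc x y)
    (fun c hc => (hd c (hsub hc)).hasDerivWithinAt)
    (fun c hc => by rw [Real.norm_eq_abs]; exact hb c (hsub hc))
    (convex_uIcc x y) left_mem_uIcc right_mem_uIcc
  simpa [Real.norm_eq_abs] using this

lemma local_bound (a b : ℝ) (f : ℝ → ℝ) (C κ ε : ℝ) (hC : 0 < C) (hκ : 0 < κ)
    (hε : 0 < ε) (hεC : ε ≤ C)
    (hd1 : ∀ x ∈ Set.Ioo a b, HasDerivAt f (deriv f x) x)
    (hd2 : ∀ x ∈ Set.Ioo a b, HasDerivAt (deriv f) (deriv (deriv f) x) x)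
    (hd3 : ∀ x ∈ Set.Ioo a b, HasDerivAt (deriv (deriv f)) (deriv (deriv (deriv f)) x) x)
    (hlow : ∀ x ∈ Set.Ioo a b, C ≤ |deriv f x| + |deriv (deriv f) x|)
    (hup2 : ∀ x ∈ Set.Ioo a b, |deriv (deriv f) x| ≤ κ)
    (hup3 : ∀ x ∈ Set.Ioo a b, |deriv (deriv (deriv f)) x| ≤ κ)
    (u : ℝ) :
    volume ({x ∈ Set.Ioo a b | |f x| ≤ ε} ∩ Set.Icc u (u + C / (4 * κ))) ≤
      ENNReal.ofReal (20 * Real.sqrt (ε / C)) := by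
  set r : ℝ := C / (4 * κ) with hr
  set S : Set ℝ := {x ∈ Set.Ioo a b | |f x| ≤ ε} ∩ Set.Icc u (u + r) with hS
  set R : Set ℝ := Set.Ioo a b ∩ Set.Icc u (u + r) with hRdef
  have hSR : S ⊆ R := fun x hx => ⟨hx.1.1, hx.2⟩
  have hRIoo : R ⊆ Set.Ioo a b := fun x hx => hx.1
  have hRconv : ∀ x ∈ R, ∀ y ∈ R, Set.Icc x y ⊆ R := by
    rintro x ⟨⟨hax, hxb⟩, ⟨hux, hxu⟩⟩ y ⟨⟨hay, hyb⟩, ⟨huy, hyu⟩⟩ c ⟨hxc, hcy⟩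
    exact ⟨⟨lt_of_lt_of_le hax hxc, lt_of_le_of_lt hcy hyb⟩,
      ⟨le_trans hux hxc, le_trans hcy hyu⟩⟩
  -- square root facts
  have hεC' : 0 < ε / C := div_pos hε hC
  have hsq : Real.sqrt (ε / C) ^ 2 = ε / C := Real.sq_sqrt hεC'.le
  have hsqpos : 0 < Real.sqrt (ε / C) := Real.sqrt_pos.2 hεC'
  have hsqle1 : Real.sqrt (ε / C) ≤ 1 := by
    nlinarith [hsq, hsqpos, (div_le_one hC).2 hεC]
  rcases S.eq_empty_or_nonempty with hSe | ⟨x₀, hx₀⟩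
  · rw [hSe]; simp
  have hx₀R : x₀ ∈ R := hSR hx₀
  have hdist : ∀ x ∈ R, |x - x₀| ≤ r := by
    rintro x ⟨_, hux, hxu⟩
    obtain ⟨_, hux₀, hxu₀⟩ := hx₀R
    rw [abs_le]; constructor <;> linarith
  have hrκ : κ * r = C / 4 := by rw [hr, mul_div_assoc', mul_comm 4 κ, ← div_div, mul_div_cancel_left₀ _ hκ.ne']
  have hprop1 : ∀ x ∈ R, |deriv f x - deriv f x₀| ≤ C / 4 := by
    intro x hx
    calc |deriv f x - deriv f x₀| ≤ κ * |x - x₀| :=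
          prop_bound a b (deriv f) (deriv (deriv f)) κ hd2 hup2 x₀ x hx₀R.1 (hRIoo hx)
      _ ≤ κ * r := by
          exact mul_le_mul_of_nonneg_left (hdist x hx) hκ.le
      _ = C / 4 := hrκ
  have hprop2 : ∀ x ∈ R, |deriv (deriv f) x - deriv (deriv f) x₀| ≤ C / 4 := by
    intro x hx
    calc |deriv (deriv f) x - deriv (deriv f) x₀| ≤ κ * |x - x₀| :=
          prop_bound a b (deriv (deriv f)) (deriv (deriv (deriv f))) κ hd3 hup3 x₀ x hx₀R.1 (hRIoo hx)
      _ ≤ κ * r := mul_le_mul_of_nonneg_left (hdist x hx) hκ.le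
      _ = C / 4 := hrκ
  have hsmallS : ∀ x ∈ S, |f x| ≤ ε := fun x hx => hx.1.2
  have hcase : C / 2 ≤ |deriv f x₀| ∨ C / 2 ≤ |deriv (deriv f) x₀| := by
    by_contra h
    push_neg at h
    have := hlow x₀ hx₀R.1
    linarith [h.1, h.2]
  rcases hcase with h1 | h2
  · -- first derivative big
    have hbd : volume S ≤ ENNReal.ofReal (2 * ε / (C / 4)) := by
      rcases le_abs'.1 h1 with hneg | hpos
      · -- deriv f x₀ ≤ -C/2
        have hg : ∀ x ∈ R, deriv f x ≤ -(C / 4) := by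
          intro x hx
          have := abs_le.1 (hprop1 x hx)
          linarith [this.2]
        refine sublevel_mono S (fun t => -f t) (fun t => -deriv f t) (C / 4) ε
          (by linarith) hε.le ?_ ?_ ?_
        · intro x hx y hy c hc
          exact (hd1 c (hRIoo (hRconv x (hSR hx) y (hSR hy) hc))).neg
        · intro x hx y hy c hc
          have := hg c (hRconv x (hSR hx) y (hSR hy) hc)
          linarith
        · intro x hx; rw [abs_neg]; exact hsmallS x hx
      · -- C/2 ≤ deriv f x₀
        have hg : ∀ x ∈ R, C / 4 ≤ deriv f x := by
          intro x hx
          have := abs_le.1 (hprop1 x hx)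
          linarith [this.1]
        refine sublevel_mono S f (deriv f) (C / 4) ε (by linarith) hε.le ?_ ?_ ?_
        · intro x hx y hy c hc
          exact hd1 c (hRIoo (hRconv x (hSR hx) y (hSR hy) hc))
        · intro x hx y hy c hc
          exact hg c (hRconv x (hSR hx) y (hSR hy) hc)
        · exact hsmallS
    refine hbd.trans (ENNReal.ofReal_le_ofReal ?_)
    rw [div_le_iff₀ (by linarith : (0:ℝ) < C / 4)]
    have hεeq : ε = C * (Real.sqrt (ε / C)) ^ 2 := by
      rw [hsq]; field_simp
    nlinarith [hsqpos, hsqle1, hC,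
      mul_nonneg (mul_nonneg hC.le hsqpos.le) (sub_nonneg.2 hsqle1)]
  · -- second derivative big
    have hsgn : (∀ x ∈ R, C / 4 ≤ deriv (deriv f) x) ∨ (∀ x ∈ R, deriv (deriv f) x ≤ -(C / 4)) := by
      rcases le_abs'.1 h2 with hneg | hpos
      · right; intro x hx
        have := abs_le.1 (hprop2 x hx)
        linarith [this.2]
      · left; intro x hx
        have := abs_le.1 (hprop2 x hx)
        linarith [this.1]
    -- betweenness of deriv f on R
    have hbet : ∀ x ∈ R, ∀ y ∈ R, x ≤ y → ∀ c ∈ Set.Icc x y,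
        min (deriv f x) (deriv f y) ≤ deriv f c ∧ deriv f c ≤ max (deriv f x) (deriv f y) := by
      intro x hx y hy hxy c hc
      have hIccR : Set.Icc x y ⊆ R := hRconv x hx y hy
      have hcont : ContinuousOn (deriv f) (Set.Icc x y) := fun c hc =>
        ((hd2 c (hRIoo (hIccR hc))).continuousAt).continuousWithinAt
      have hdiff : DifferentiableOn ℝ (deriv f) (interior (Set.Icc x y)) := by
        rw [interior_Icc]
        exact fun c hc => ((hd2 c (hRIoo (hIccR (Ioo_subset_Icc_self hc)))).differentiableAt).differentiableWithinAt
      have hxm : x ∈ Set.Icc x y := ⟨le_refl x, hxy⟩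
      have hym : y ∈ Set.Icc x y := ⟨hxy, le_refl y⟩
      rcases hsgn with hpos | hneg
      · have hmono : MonotoneOn (deriv f) (Set.Icc x y) := by
          apply monotoneOn_of_deriv_nonneg (convex_Icc x y) hcont hdiff
          intro c hc
          rw [interior_Icc] at hc
          have := hpos c (hIccR (Ioo_subset_Icc_self hc))
          linarith
        exact ⟨le_trans (min_le_left _ _) (hmono hxm hc hc.1),
          le_trans (hmono hc hym hc.2) (le_max_right _ _)⟩
      · have hanti : AntitoneOn (deriv f) (Set.Icc x y) := by
          apply antitoneOn_of_deriv_nonpos (convex_Icc x y) hcont hdiff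
          intro c hc
          rw [interior_Icc] at hc
          have := hneg c (hIccR (Ioo_subset_Icc_self hc))
          linarith
        exact ⟨le_trans (min_le_right _ _) (hanti hc hym hc.2),
          le_trans (hanti hxm hc hc.1) (le_max_left _ _)⟩
    set δ : ℝ := Real.sqrt (ε * C) with hδ
    have hδpos : 0 < δ := Real.sqrt_pos.2 (mul_pos hε hC)
    set A : Set ℝ := S ∩ {x | |deriv f x| ≤ δ} with hA
    set Bp : Set ℝ := S ∩ {x | δ ≤ deriv f x} with hBp
    set Bm : Set ℝ := S ∩ {x | deriv f x ≤ -δ} with hBm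
    have hcover : S ⊆ A ∪ Bp ∪ Bm := by
      intro x hx
      rcases le_total (|deriv f x|) δ with h | h
      · exact Or.inl (Or.inl ⟨hx, h⟩)
      · rcases le_abs'.1 h with hn | hp
        · exact Or.inr ⟨hx, hn⟩
        · exact Or.inl (Or.inr ⟨hx, hp⟩)
    have hvolA : volume A ≤ ENNReal.ofReal (2 * δ / (C / 4)) := by
      rcases hsgn with hpos | hneg
      · refine sublevel_mono A (deriv f) (deriv (deriv f)) (C / 4) δ (by linarith) hδpos.le ?_ ?_ ?_
        · intro x hx y hy c hc
          exact hd2 c (hRIoo (hRconv x (hSR hx.1) y (hSR hy.1) hc))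
        · intro x hx y hy c hc
          exact hpos c (hRconv x (hSR hx.1) y (hSR hy.1) hc)
        · exact fun x hx => hx.2
      · refine sublevel_mono A (fun t => -deriv f t) (fun t => -deriv (deriv f) t) (C / 4) δ
          (by linarith) hδpos.le ?_ ?_ ?_
        · intro x hx y hy c hc
          exact (hd2 c (hRIoo (hRconv x (hSR hx.1) y (hSR hy.1) hc))).neg
        · intro x hx y hy c hc
          have := hneg c (hRconv x (hSR hx.1) y (hSR hy.1) hc)
          linarith
        · intro x hx; rw [abs_neg]; exact hx.2
    have hvolBp : volume Bp ≤ ENNReal.ofReal (2 * ε / δ) := by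
      refine sublevel_mono Bp f (deriv f) δ ε hδpos hε.le ?_ ?_ ?_
      · intro x hx y hy c hc
        exact hd1 c (hRIoo (hRconv x (hSR hx.1) y (hSR hy.1) hc))
      · intro x hx y hy c hc
        have hxy : x ≤ y := le_trans hc.1 hc.2
        have := (hbet x (hSR hx.1) y (hSR hy.1) hxy c hc).1
        have hminδ : δ ≤ min (deriv f x) (deriv f y) := le_min hx.2 hy.2
        linarith
      · exact fun x hx => hsmallS x hx.1
    have hvolBm : volume Bm ≤ ENNReal.ofReal (2 * ε / δ) := by
      refine sublevel_mono Bm (fun t => -f t) (fun t => -deriv f t) δ ε hδpos hε.le ?_ ?_ ?_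
      · intro x hx y hy c hc
        exact (hd1 c (hRIoo (hRconv x (hSR hx.1) y (hSR hy.1) hc))).neg
      · intro x hx y hy c hc
        have hxy : x ≤ y := le_trans hc.1 hc.2
        have := (hbet x (hSR hx.1) y (hSR hy.1) hxy c hc).2
        have hmaxδ : max (deriv f x) (deriv f y) ≤ -δ := max_le hx.2 hy.2
        show δ ≤ -deriv f c
        linarith
      · intro x hx; rw [abs_neg]; exact hsmallS x hx.1
    calc volume S ≤ volume (A ∪ Bp ∪ Bm) := measure_mono hcover
      _ ≤ volume (A ∪ Bp) + volume Bm := measure_union_le _ _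
      _ ≤ volume A + volume Bp + volume Bm := by
          gcongr
          exact measure_union_le _ _
      _ ≤ ENNReal.ofReal (2 * δ / (C / 4)) + ENNReal.ofReal (2 * ε / δ) + ENNReal.ofReal (2 * ε / δ) := by
          gcongr
      _ ≤ ENNReal.ofReal (20 * Real.sqrt (ε / C)) := by
          rw [← ENNReal.ofReal_add (by positivity) (by positivity),
            ← ENNReal.ofReal_add (by positivity) (by positivity)]
          apply ENNReal.ofReal_le_ofReal
          have hse : Real.sqrt ε > 0 := Real.sqrt_pos.2 hε
          have hsC : Real.sqrt C > 0 := Real.sqrt_pos.2 hC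
          have h1 : δ = Real.sqrt ε * Real.sqrt C := Real.sqrt_mul hε.le C
          have h2 : Real.sqrt (ε / C) = Real.sqrt ε / Real.sqrt C := Real.sqrt_div hε.le C
          have hεs : Real.sqrt ε ^ 2 = ε := Real.sq_sqrt hε.le
          have hCs : Real.sqrt C ^ 2 = C := Real.sq_sqrt hC.le
          have htne : Real.sqrt C ≠ 0 := hsC.ne'
          have hsne : Real.sqrt ε ≠ 0 := hse.ne'
          have e1 : 2 * (Real.sqrt ε * Real.sqrt C) / (C / 4) = 8 * (Real.sqrt ε / Real.sqrt C) := by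
            rw [mul_div_assoc', div_eq_div_iff (by positivity) htne]; linear_combination (2 * Real.sqrt ε) * hCs
          have e2 : 2 * ε / (Real.sqrt ε * Real.sqrt C) = 2 * (Real.sqrt ε / Real.sqrt C) := by
            rw [mul_div_assoc', div_eq_div_iff (by positivity) htne]; linear_combination (-2 * Real.sqrt C) * hεs
          rw [h1, h2, e1, e2]
          have : 0 ≤ Real.sqrt ε / Real.sqrt C := by positivity
          linarith


theorem stmt_16 (a b : ℝ) (hab : a < b) (f : ℝ → ℝ)
    (hf : ContDiffOn ℝ 3 f (Set.Icc a b))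
    (C κ : ℝ) (hC : 0 < C)
    (hlower : ∀ x ∈ Set.Icc a b, C ≤ |deriv f x| + |deriv (deriv f) x|)
    (hupper : ∀ x ∈ Set.Icc a b, |deriv (deriv f) x| + |deriv (deriv (deriv f)) x| ≤ κ)
    (ε : ℝ) (hε : 0 < ε) (hεC : ε ≤ C) (hCκ : C ≤ κ * (b - a)) :
    volume {x ∈ Set.Icc a b | |f x| ≤ ε} ≤
      ENNReal.ofReal (100 * (κ / C) * Real.sqrt (ε / C) * (b - a)) := by
  have hba : 0 < b - a := sub_pos.2 hab
  have hκ : 0 < κ := by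
    by_contra h
    push_neg at h
    nlinarith
  set ℓ : ℝ := C / (4 * κ) with hℓ
  have hℓpos : 0 < ℓ := by rw [hℓ]; positivity
  have h1 : ContDiffOn ℝ 3 f (Set.Ioo a b) := hf.mono Set.Ioo_subset_Icc_self
  have h2 : ContDiffOn ℝ 2 (deriv f) (Set.Ioo a b) :=
    h1.deriv_of_isOpen isOpen_Ioo (by norm_num)
  have h3 : ContDiffOn ℝ 1 (deriv (deriv f)) (Set.Ioo a b) :=
    h2.deriv_of_isOpen isOpen_Ioo (by norm_num)
  have hd1 : ∀ x ∈ Set.Ioo a b, HasDerivAt f (deriv f x) x := fun x hx =>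
    ((h1.differentiableOn (by norm_num)).differentiableAt (isOpen_Ioo.mem_nhds hx)).hasDerivAt
  have hd2 : ∀ x ∈ Set.Ioo a b, HasDerivAt (deriv f) (deriv (deriv f) x) x := fun x hx =>
    ((h2.differentiableOn (by norm_num)).differentiableAt (isOpen_Ioo.mem_nhds hx)).hasDerivAt
  have hd3 : ∀ x ∈ Set.Ioo a b, HasDerivAt (deriv (deriv f)) (deriv (deriv (deriv f)) x) x :=
    fun x hx =>
    ((h3.differentiableOn (by norm_num)).differentiableAt (isOpen_Ioo.mem_nhds hx)).hasDerivAt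
  have hlow' : ∀ x ∈ Set.Ioo a b, C ≤ |deriv f x| + |deriv (deriv f) x| :=
    fun x hx => hlower x (Set.Ioo_subset_Icc_self hx)
  have hup2 : ∀ x ∈ Set.Ioo a b, |deriv (deriv f) x| ≤ κ := fun x hx => by
    have h := hupper x (Set.Ioo_subset_Icc_self hx)
    have := abs_nonneg (deriv (deriv (deriv f)) x)
    linarith
  have hup3 : ∀ x ∈ Set.Ioo a b, |deriv (deriv (deriv f)) x| ≤ κ := fun x hx => by
    have h := hupper x (Set.Ioo_subset_Icc_self hx)
    have := abs_nonneg (deriv (deriv f) x)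
    linarith
  set N : ℕ := ⌈(b - a) / ℓ⌉₊ with hN
  set S' : Set ℝ := {x ∈ Set.Ioo a b | |f x| ≤ ε} with hS'
  have hcover : {x ∈ Set.Icc a b | |f x| ≤ ε} ⊆
      (⋃ j ∈ Finset.range N, (S' ∩ Set.Icc (a + j * ℓ) (a + j * ℓ + ℓ))) ∪ {a, b} := by
    rintro x ⟨⟨hax, hxb⟩, hfx⟩
    rcases eq_or_lt_of_le hax with rfl | hax'
    · exact Or.inr (Or.inl rfl)
    rcases eq_or_lt_of_le hxb with rfl | hxb'
    · exact Or.inr (Or.inr rfl)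
    left
    set j : ℕ := ⌊(x - a) / ℓ⌋₊ with hj
    have hx0 : 0 ≤ (x - a) / ℓ := div_nonneg (by linarith) hℓpos.le
    have hjle : (j : ℝ) ≤ (x - a) / ℓ := Nat.floor_le hx0
    have hjlt : (x - a) / ℓ < j + 1 := Nat.lt_floor_add_one _
    have hjN : j < N := by
      apply Nat.lt_ceil.2
      refine lt_of_le_of_lt hjle ?_
      apply div_lt_div_of_pos_right ?_ hℓpos
      linarith
    have hm1 : a + (j : ℝ) * ℓ ≤ x := by
      have h := (le_div_iff₀ hℓpos).1 hjle
      linarith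
    have hm2 : x ≤ a + (j : ℝ) * ℓ + ℓ := by
      have h := (div_lt_iff₀ hℓpos).1 hjlt
      nlinarith
    exact Set.mem_biUnion (Finset.mem_range.2 hjN) ⟨⟨⟨hax', hxb'⟩, hfx⟩, hm1, hm2⟩
  have hpair : volume ({a, b} : Set ℝ) = 0 :=
    ((Set.finite_singleton b).insert a).measure_zero volume
  have hloc : ∀ j ∈ Finset.range N,
      volume (S' ∩ Set.Icc (a + j * ℓ) (a + j * ℓ + ℓ)) ≤
        ENNReal.ofReal (20 * Real.sqrt (ε / C)) := by
    intro j _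
    rw [hℓ]
    exact local_bound a b f C κ ε hC hκ hε hεC hd1 hd2 hd3 hlow' hup2 hup3 (a + j * (C / (4 * κ)))
  have hNle : (N : ℝ) ≤ 5 * (κ * (b - a) / C) := by
    have hrval : (b - a) / ℓ = 4 * (κ * (b - a) / C) := by
      rw [hℓ]; field_simp
    have h1C : 1 ≤ κ * (b - a) / C := (one_le_div hC).2 hCκ
    have hce : (N : ℝ) < (b - a) / ℓ + 1 :=
      Nat.ceil_lt_add_one (div_nonneg hba.le hℓpos.le)
    rw [hrval] at hce
    linarith
  calc volume {x ∈ Set.Icc a b | |f x| ≤ ε}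
      ≤ volume ((⋃ j ∈ Finset.range N, (S' ∩ Set.Icc (a + j * ℓ) (a + j * ℓ + ℓ))) ∪ ({a, b} : Set ℝ)) :=
        measure_mono hcover
    _ ≤ volume (⋃ j ∈ Finset.range N, (S' ∩ Set.Icc (a + j * ℓ) (a + j * ℓ + ℓ))) +
          volume ({a, b} : Set ℝ) := measure_union_le _ _
    _ = volume (⋃ j ∈ Finset.range N, (S' ∩ Set.Icc (a + j * ℓ) (a + j * ℓ + ℓ))) := by
        rw [hpair, add_zero]
    _ ≤ ∑ j ∈ Finset.range N, volume (S' ∩ Set.Icc (a + j * ℓ) (a + j * ℓ + ℓ)) :=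
        measure_biUnion_finset_le _ _
    _ ≤ ∑ j ∈ Finset.range N, ENNReal.ofReal (20 * Real.sqrt (ε / C)) :=
        Finset.sum_le_sum hloc
    _ = (N : ENNReal) * ENNReal.ofReal (20 * Real.sqrt (ε / C)) := by
        rw [Finset.sum_const, Finset.card_range, nsmul_eq_mul]
    _ = ENNReal.ofReal ((N : ℝ) * (20 * Real.sqrt (ε / C))) := by
        rw [ENNReal.ofReal_mul (Nat.cast_nonneg _), ENNReal.ofReal_natCast]
    _ ≤ ENNReal.ofReal (100 * (κ / C) * Real.sqrt (ε / C) * (b - a)) := by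
        apply ENNReal.ofReal_le_ofReal
        have hs0 : 0 ≤ Real.sqrt (ε / C) := Real.sqrt_nonneg _
        calc (N : ℝ) * (20 * Real.sqrt (ε / C))
            ≤ (5 * (κ * (b - a) / C)) * (20 * Real.sqrt (ε / C)) :=
              mul_le_mul_of_nonneg_right hNle (by positivity)
          _ = 100 * (κ / C) * Real.sqrt (ε / C) * (b - a) := by ring
end
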